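/- arXiv:0712.3920 — 2 statements merged into one kernel-verified Lean document; each statement's English description precedes it below -/
import Mathlib

section
/- Let d ≥ 1, let 𝒢 ⊆ L²(ℝ^d; ℝ^d) be the closure of the set of gradients {∇φ : φ a Schwartz function on ℝ^d}, and let Π denote the orthogonal projection of L²(ℝ^d; ℝ^d) onto 𝒢. Let a ∈ L^∞(ℝ^d; ℝ) with ‖a‖_{L^∞} < 1, let W ∈ L²(ℝ^d; ℝ^d), and let 𝔔[a]W = Σ_{n=0}^{∞} (−1)ⁿ (Π(a·Π ·))ⁿ (ΠW). Then V := 𝔔[a]W is the unique element of L²(ℝ^d; ℝ^d) satisfying both (i) ΠV = V, and (ii) ∫_{ℝ^d} (1 + a) V · ∇φ = ∫_{ℝ^d} W · ∇φ for every Schwartz function φ on ℝ^d (i.e., ∇·((1+a)V) = ∇·W in the sense of distributions). -/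
open MeasureTheory Real RealInnerProductSpace

/-- The `L²(ℝ^d; ℝ^d)` space of vector fields. -/
noncomputable abbrev L2Vec (d : ℕ) :=
  MeasureTheory.Lp (EuclideanSpace ℝ (Fin d)) 2
    (volume : MeasureTheory.Measure (EuclideanSpace ℝ (Fin d)))

section Aux
variable {H : Type*} [NormedAddCommGroup H]

/-- Neumann series for a strict contraction. -/
lemma neumann_series [NormedSpace ℝ H] [CompleteSpace H]
    (T : H →L[ℝ] H) (C : ℝ) (hC0 : 0 ≤ C) (hC1 : C < 1)
    (hTn : ∀ u, ‖T u‖ ≤ C * ‖u‖) (w : H) :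
    ∃ V, HasSum (fun n : ℕ => (-1 : ℝ) ^ n • (⇑T)^[n] w) V ∧ V + T V = w := by
  set f : ℕ → H := fun n => (-1 : ℝ) ^ n • (⇑T)^[n] w with hfdef
  have hfnorm : ∀ n, ‖f n‖ ≤ C ^ n * ‖w‖ := by
    intro n
    have h : ‖(⇑T)^[n] w‖ ≤ C ^ n * ‖w‖ := by
      induction n with
      | zero => simp
      | succ n ih =>
        rw [Function.iterate_succ_apply']
        calc ‖T ((⇑T)^[n] w)‖ ≤ C * ‖(⇑T)^[n] w‖ := hTn _
          _ ≤ C * (C ^ n * ‖w‖) := mul_le_mul_of_nonneg_left ih hC0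
          _ = C ^ (n + 1) * ‖w‖ := by ring
    calc ‖f n‖ = ‖(⇑T)^[n] w‖ := by rw [hfdef]; simp [norm_smul]
      _ ≤ C ^ n * ‖w‖ := h
  have hsummable : Summable f :=
    Summable.of_norm_bounded
      ((summable_geometric_of_lt_one hC0 hC1).mul_right _) hfnorm
  refine ⟨∑' n, f n, hsummable.hasSum, ?_⟩
  set V := ∑' n, f n with hV
  have hsum : HasSum f V := hsummable.hasSum
  have h1 : HasSum (fun n => T (f n)) (T V) := hsum.mapL T
  have h2 : ∀ n, T (f n) = -(f (n + 1)) := by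
    intro n
    have e1 : f (n + 1) = (-1 : ℝ) ^ (n + 1) • T ((⇑T)^[n] w) := by
      rw [hfdef]; simp [Function.iterate_succ_apply']
    have e2 : T (f n) = (-1 : ℝ) ^ n • T ((⇑T)^[n] w) := by
      rw [hfdef]; exact T.map_smul _ _
    rw [e1, e2, pow_succ, mul_comm, mul_smul]
    simp
  simp only [h2] at h1
  have h3 : HasSum (fun n => f (n + 1)) (-(T V)) := by simpa using h1.neg
  have h4 : HasSum f (-(T V) + ∑ i ∈ Finset.range 1, f i) := (hasSum_nat_add_iff 1).1 h3
  have h5 : V = -(T V) + f 0 := by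
    have := h4.unique hsum
    simpa using this.symm
  have hf0 : f 0 = w := by rw [hfdef]; simp
  rw [hf0, neg_add_eq_sub, eq_sub_iff_add_eq] at h5
  exact h5

variable [InnerProductSpace ℝ H] (S : Set H) (P : H →L[ℝ] H)
variable (hPmem : ∀ U : H, P U ∈ closure S)
variable (hPorth : ∀ U : H, ∀ g ∈ closure S, ⟪U - P U, g⟫ = (0 : ℝ))

include hPorth in
lemma proj_inner (x g : H) (hg : g ∈ closure S) : ⟪P x, g⟫ = ⟪x, g⟫ := by
  have := hPorth x g hg
  rw [inner_sub_left] at this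
  linarith

include hPmem hPorth in
lemma proj_norm_le (x : H) : ‖P x‖ ≤ ‖x‖ := by
  have h := hPorth x (P x) (hPmem x)
  have hx : x = (x - P x) + P x := by abel
  have h2 : ‖x‖ ^ 2 = ‖x - P x‖ ^ 2 + 2 * ⟪x - P x, P x⟫ + ‖P x‖ ^ 2 := by
    conv_lhs => rw [hx]
    exact norm_add_sq_real _ _
  nlinarith [norm_nonneg (x - P x), norm_nonneg (P x), norm_nonneg x]

include hPmem hPorth in
lemma proj_eq_zero (x : H) (hx : ∀ g ∈ closure S, ⟪x, g⟫ = (0 : ℝ)) : P x = 0 := by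
  have h1 : ⟪x, P x⟫ = (0 : ℝ) := hx _ (hPmem x)
  have h2 : ⟪x - P x, P x⟫ = (0 : ℝ) := hPorth x (P x) (hPmem x)
  rw [inner_sub_left, h1] at h2
  have h3 : ⟪P x, P x⟫ = (0 : ℝ) := by linarith
  have h4 : ‖P x‖ ^ 2 = 0 := by rw [← real_inner_self_eq_norm_sq]; exact h3
  have h5 : ‖P x‖ = 0 := by nlinarith [norm_nonneg (P x)]
  exact norm_eq_zero.1 h5

end Aux

lemma grad_memℒp (d : ℕ) (φ : SchwartzMap (EuclideanSpace ℝ (Fin d)) ℝ) :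
    MemLp (gradient (⇑φ)) 2 (volume : Measure (EuclideanSpace ℝ (Fin d))) := by
  set E := EuclideanSpace ℝ (Fin d)
  set g := SchwartzMap.fderivCLM ℝ E ℝ φ with hg
  have hgrad : ∀ x, gradient (⇑φ) x = (InnerProductSpace.toDual ℝ E).symm (g x) := fun x => rfl
  have hcont : Continuous (gradient (⇑φ)) := by
    simp only [funext hgrad]
    exact (InnerProductSpace.toDual ℝ E).symm.continuous.comp g.continuous
  have hnorm : ∀ x, ‖gradient (⇑φ) x‖ = ‖g x‖ := fun x => by
    rw [hgrad]; exact (InnerProductSpace.toDual ℝ E).symm.norm_map _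
  refine (memLp_two_iff_integrable_sq_norm hcont.aestronglyMeasurable).2 ?_
  set M := (SchwartzMap.seminorm ℝ 0 0) g with hM
  refine ((g.integrable (μ := volume)).norm.const_mul M).mono'
    ((hcont.norm.pow 2).aestronglyMeasurable) ?_
  filter_upwards with x
  have h1 : ‖g x‖ ≤ M := SchwartzMap.norm_le_seminorm ℝ g x
  have h0 : (0:ℝ) ≤ ‖g x‖ := norm_nonneg _
  rw [Real.norm_eq_abs, abs_of_nonneg (by positivity), hnorm]
  nlinarith

/-- The L² element representing the gradient of a Schwartz function. -/
noncomputable def gradL2 (d : ℕ) (φ : SchwartzMap (EuclideanSpace ℝ (Fin d)) ℝ) : L2Vec d :=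
  (grad_memℒp d φ).toLp (gradient (⇑φ))

lemma gradL2_coe (d : ℕ) (φ : SchwartzMap (EuclideanSpace ℝ (Fin d)) ℝ) :
    ⇑(gradL2 d φ) =ᵐ[volume] gradient (⇑φ) := (grad_memℒp d φ).coeFn_toLp

/-- Multiplication by a bounded function is a bounded operation on L². -/
lemma mul_norm_le (d : ℕ) (a : EuclideanSpace ℝ (Fin d) → ℝ) (C : ℝ) (hC0 : 0 ≤ C)
    (ha : ∀ᵐ X : EuclideanSpace ℝ (Fin d), |a X| ≤ C)
    (u Wu : L2Vec d) (hWu : ⇑Wu =ᵐ[volume] fun X => a X • u X) : ‖Wu‖ ≤ C * ‖u‖ := by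
  have h1 : eLpNorm (⇑Wu) 2 volume ≤ eLpNorm (fun X => C • u X) 2 volume := by
    apply eLpNorm_mono_ae
    filter_upwards [hWu, ha] with X hX haX
    rw [hX]
    simp only [norm_smul, Real.norm_eq_abs, abs_of_nonneg hC0]
    exact mul_le_mul_of_nonneg_right haX (norm_nonneg _)
  have h2 : eLpNorm (fun X => C • u X) 2 volume = ‖C‖₊ * eLpNorm (⇑u) 2 volume :=
    eLpNorm_const_smul C (⇑u) 2 volume
  rw [Lp.norm_def, Lp.norm_def]
  calc (eLpNorm (⇑Wu) 2 volume).toReal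
      ≤ (‖C‖₊ * eLpNorm (⇑u) 2 volume).toReal := by
        apply ENNReal.toReal_mono
        · exact ENNReal.mul_ne_top ENNReal.coe_ne_top (Lp.eLpNorm_ne_top u)
        · rw [← h2]; exact h1
    _ = C * (eLpNorm (⇑u) 2 volume).toReal := by
        rw [ENNReal.toReal_mul, ENNReal.coe_toReal, coe_nnnorm, Real.norm_eq_abs,
          abs_of_nonneg hC0]

/-- The weighted integral against a gradient, expressed as an L² inner product. -/
lemma weighted_integral_eq (d : ℕ) (a : EuclideanSpace ℝ (Fin d) → ℝ)
    (u Wu : L2Vec d) (hWu : ⇑Wu =ᵐ[volume] fun X => a X • u X)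
    (φ : SchwartzMap (EuclideanSpace ℝ (Fin d)) ℝ) :
    ∫ X, (1 + a X) * ⟪u X, gradient (⇑φ) X⟫ = ⟪u + Wu, gradL2 d φ⟫ := by
  rw [MeasureTheory.L2.inner_def]
  apply integral_congr_ae
  filter_upwards [hWu, Lp.coeFn_add u Wu, gradL2_coe d φ] with X hX hadd hgr
  rw [hadd]
  simp only [Pi.add_apply, hX, hgr, inner_add_left, real_inner_smul_left]
  ring

lemma integral_inner_grad_eq (d : ℕ) (u : L2Vec d)
    (φ : SchwartzMap (EuclideanSpace ℝ (Fin d)) ℝ) :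
    ∫ X, ⟪u X, gradient (⇑φ) X⟫ = ⟪u, gradL2 d φ⟫ := by
  rw [MeasureTheory.L2.inner_def]
  apply integral_congr_ae
  filter_upwards [gradL2_coe d φ] with X hgr
  rw [hgr]


set_option maxHeartbeats 4000000 in
/-- with `Π` the orthogonal projection onto the closure `𝒢` of gradients of
Schwartz functions, `a ∈ L^∞` with `‖a‖_∞ ≤ C < 1`, and `T(U) = Π(a·ΠU)`, the sum
`V = 𝔔[a]W = Σ (-1)ⁿ Tⁿ(ΠW)` is the unique element of `L²(ℝ^d;ℝ^d)` satisfying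
`ΠV = V` and `∇·((1+a)V) = ∇·W` in the sense of distributions. -/
theorem Q_operator_solves_div_equation (d : ℕ) (hd : 1 ≤ d)
    (G₀ : Set (L2Vec d))
    (hG₀ : G₀ = {u : L2Vec d | ∃ φ : SchwartzMap (EuclideanSpace ℝ (Fin d)) ℝ,
      ∀ᵐ X : EuclideanSpace ℝ (Fin d), u X = gradient (⇑φ) X})
    (P : L2Vec d →L[ℝ] L2Vec d)
    (hPmem : ∀ U : L2Vec d, P U ∈ closure G₀)
    (hPid : ∀ U ∈ closure G₀, P U = U)
    (hPorth : ∀ U : L2Vec d, ∀ g ∈ closure G₀, ⟪U - P U, g⟫ = (0 : ℝ))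
    (a : EuclideanSpace ℝ (Fin d) → ℝ)
    (ham : AEStronglyMeasurable a (volume : MeasureTheory.Measure (EuclideanSpace ℝ (Fin d))))
    (C : ℝ) (hC0 : 0 ≤ C) (hC1 : C < 1)
    (ha : ∀ᵐ X : EuclideanSpace ℝ (Fin d), |a X| ≤ C)
    (T : L2Vec d →L[ℝ] L2Vec d)
    (hT : ∀ U : L2Vec d, ∃ W : L2Vec d,
      (⇑W =ᵐ[volume] fun X => a X • (P U) X) ∧ T U = P W)
    (W : L2Vec d) :
    ∃ V : L2Vec d,
      HasSum (fun n : ℕ => (-1 : ℝ) ^ n • (⇑T)^[n] (P W)) V ∧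
      P V = V ∧
      (∀ φ : SchwartzMap (EuclideanSpace ℝ (Fin d)) ℝ,
        ∫ X : EuclideanSpace ℝ (Fin d), (1 + a X) * ⟪V X, gradient (⇑φ) X⟫
          = ∫ X : EuclideanSpace ℝ (Fin d), ⟪W X, gradient (⇑φ) X⟫) ∧
      ∀ V' : L2Vec d, P V' = V' →
        (∀ φ : SchwartzMap (EuclideanSpace ℝ (Fin d)) ℝ,
          ∫ X : EuclideanSpace ℝ (Fin d), (1 + a X) * ⟪V' X, gradient (⇑φ) X⟫
            = ∫ X : EuclideanSpace ℝ (Fin d), ⟪W X, gradient (⇑φ) X⟫) →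
        V' = V := by
  have hgφ_mem : ∀ φ : SchwartzMap (EuclideanSpace ℝ (Fin d)) ℝ, gradL2 d φ ∈ closure G₀ := by
    intro φ
    apply subset_closure
    rw [hG₀]
    exact ⟨φ, gradL2_coe d φ⟩
  have hTnorm : ∀ u : L2Vec d, ‖T u‖ ≤ C * ‖u‖ := by
    intro u
    obtain ⟨Wu, hWu, hTu⟩ := hT u
    calc ‖T u‖ = ‖P Wu‖ := by rw [hTu]
      _ ≤ ‖Wu‖ := proj_norm_le G₀ P hPmem hPorth Wu
      _ ≤ C * ‖P u‖ := mul_norm_le d a C hC0 ha _ _ hWu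
      _ ≤ C * ‖u‖ :=
          mul_le_mul_of_nonneg_left (proj_norm_le G₀ P hPmem hPorth u) hC0
  obtain ⟨V, hsum, hfix⟩ := neumann_series T C hC0 hC1 hTnorm (P W)
  -- each term is fixed by P
  have hTmem : ∀ x : L2Vec d, T x ∈ closure G₀ := by
    intro x
    obtain ⟨Wx, _, hTx⟩ := hT x
    rw [hTx]; exact hPmem _
  have hiter_mem : ∀ n, (⇑T)^[n] (P W) ∈ closure G₀ := by
    intro n
    induction n with
    | zero => exact hPmem W
    | succ n ih => rw [Function.iterate_succ_apply']; exact hTmem _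
  have hPV : P V = V := by
    have h1 : HasSum (fun n : ℕ => P ((-1 : ℝ) ^ n • (⇑T)^[n] (P W))) (P V) := hsum.mapL P
    have h2 : ∀ n : ℕ, P ((-1 : ℝ) ^ n • (⇑T)^[n] (P W)) = (-1 : ℝ) ^ n • (⇑T)^[n] (P W) := by
      intro n
      rw [P.map_smul, hPid _ (hiter_mem n)]
    simp only [h2] at h1
    exact h1.unique hsum
  obtain ⟨Wv, hWv, hTV⟩ := hT V
  rw [hPV] at hWv
  have hmain : ∀ φ : SchwartzMap (EuclideanSpace ℝ (Fin d)) ℝ,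
      ∫ X, (1 + a X) * ⟪V X, gradient (⇑φ) X⟫ = ∫ X, ⟪W X, gradient (⇑φ) X⟫ := by
    intro φ
    have e1 := weighted_integral_eq d a V Wv hWv φ
    have e2 := integral_inner_grad_eq d W φ
    have e4 : ⟪V + Wv, gradL2 d φ⟫ = ⟪V, gradL2 d φ⟫ + ⟪Wv, gradL2 d φ⟫ :=
      inner_add_left _ _ _
    have e3 : ⟪T V, gradL2 d φ⟫ = ⟪Wv, gradL2 d φ⟫ := by
      rw [hTV]; exact proj_inner G₀ P hPorth Wv (gradL2 d φ) (hgφ_mem φ)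
    have e5 : ⟪V + T V, gradL2 d φ⟫ = ⟪V, gradL2 d φ⟫ + ⟪T V, gradL2 d φ⟫ :=
      inner_add_left _ _ _
    have e7 : ⟪V + T V, gradL2 d φ⟫ = ⟪P W, gradL2 d φ⟫ := by rw [hfix]
    have e6 : ⟪P W, gradL2 d φ⟫ = ⟪W, gradL2 d φ⟫ :=
      proj_inner G₀ P hPorth W (gradL2 d φ) (hgφ_mem φ)
    linarith
  refine ⟨V, hsum, hPV, hmain, ?_⟩
  -- uniqueness
  intro V' hPV' heq
  obtain ⟨W', hW', hTV'⟩ := hT V'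
  rw [hPV'] at hW'
  have hzero : ∀ g ∈ closure G₀, ⟪V' + W' - W, g⟫ = (0 : ℝ) := by
    have hcl : closure G₀ ⊆ {g : L2Vec d | ⟪V' + W' - W, g⟫ = (0 : ℝ)} := by
      apply closure_minimal
      · intro u hu
        rw [hG₀] at hu
        obtain ⟨φ, hφ⟩ := hu
        have huφ : u = gradL2 d φ := by
          apply Lp.ext
          filter_upwards [hφ, gradL2_coe d φ] with X h1 h2
          rw [h1, h2]
        have h1 := heq φ
        have e1 := weighted_integral_eq d a V' W' hW' φ
        have e2 := integral_inner_grad_eq d W φ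
        show ⟪V' + W' - W, u⟫ = (0 : ℝ)
        rw [huφ, inner_sub_left]
        linarith
      · exact isClosed_eq ((innerSL ℝ (V' + W' - W)).continuous) continuous_const
    intro g hg
    exact hcl hg
  have hPzero : P (V' + W' - W) = 0 :=
    proj_eq_zero G₀ P hPmem hPorth _ hzero
  have hfix' : V' + T V' = P W := by
    rw [map_sub, map_add, hPV', ← hTV'] at hPzero
    rw [← sub_eq_zero]
    exact hPzero
  have hD : (V' - V) + T (V' - V) = 0 := by
    have h0 : (V' + T V') - (V + T V) = 0 := by rw [hfix, hfix', sub_self]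
    calc (V' - V) + T (V' - V) = (V' + T V') - (V + T V) := by rw [map_sub]; abel
      _ = 0 := h0
  have hDnorm : ‖V' - V‖ ≤ C * ‖V' - V‖ := by
    have heqn : V' - V = -(T (V' - V)) := eq_neg_of_add_eq_zero_left hD
    calc ‖V' - V‖ = ‖-(T (V' - V))‖ := congrArg norm heqn
      _ = ‖T (V' - V)‖ := norm_neg _
      _ ≤ C * ‖V' - V‖ := hTnorm _
  have hn0 : ‖V' - V‖ = 0 := by nlinarith [norm_nonneg (V' - V)]
  exact sub_eq_zero.1 (norm_eq_zero.1 hn0)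
end

section
/- Let d ≥ 1, μ₂ > 0, let ζ : ℝ^d → ℝ be of class C², and let Φ : ℝ^d × I → ℝ (I an open interval) be of class C³ and satisfy μ₂ Δ_X Φ + ∂_z² Φ = 0. Define the (d+1)×(d+1) matrix field Q₁(X,z) with upper-left d×d block ζ(X) I_{d×d}, upper-right column −√μ₂ (z+1) ∇ζ(X), lower-left row −√μ₂ (z+1) ∇ζ(X)^T, and lower-right entry −ζ(X). Then, pointwise on ℝ^d × I, ∇^{μ₂}_{X,z} · (Q₁ ∇^{μ₂}_{X,z} Φ) = −(μ₂ Δ_X + ∂_z²)[(z+1) ζ(X) ∂_zΦ], where ∇^{μ₂}_{X,z} = (√μ₂ ∇_X^T, ∂_z)^T denotes the scaled full gradient. -/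
open Real Set

section helpers

variable {E : Type*} [NormedAddCommGroup E] [NormedSpace ℝ E]

lemma pd_congr {f g : E → ℝ} {q : E} (h : f =ᶠ[nhds q] g) (v : E) :
    fderiv ℝ f q v = fderiv ℝ g q v := by rw [h.fderiv_eq]

lemma pd_mul {f g : E → ℝ} {q : E} (hf : DifferentiableAt ℝ f q)
    (hg : DifferentiableAt ℝ g q) (v : E) :
    fderiv ℝ (fun x => f x * g x) q v
      = fderiv ℝ f q v * g q + f q * fderiv ℝ g q v := by
  rw [fderiv_fun_mul hf hg]
  simp only [ContinuousLinearMap.add_apply, ContinuousLinearMap.smul_apply, smul_eq_mul]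
  ring

lemma pd_add {f g : E → ℝ} {q : E} (hf : DifferentiableAt ℝ f q)
    (hg : DifferentiableAt ℝ g q) (v : E) :
    fderiv ℝ (fun x => f x + g x) q v = fderiv ℝ f q v + fderiv ℝ g q v := by
  rw [fderiv_fun_add hf hg]; simp

lemma pd_sum {ι : Type*} (s : Finset ι) {f : ι → E → ℝ} {q : E}
    (hf : ∀ i ∈ s, DifferentiableAt ℝ (f i) q) (v : E) :
    fderiv ℝ (fun x => ∑ i ∈ s, f i x) q v = ∑ i ∈ s, fderiv ℝ (f i) q v := by
  rw [fderiv_fun_sum hf]; simp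

lemma pd_const_mul {f : E → ℝ} {q : E} (hf : DifferentiableAt ℝ f q) (c : ℝ) (v : E) :
    fderiv ℝ (fun x => c * f x) q v = c * fderiv ℝ f q v := by
  rw [fderiv_const_mul hf]; simp

lemma pd_neg {f : E → ℝ} {q : E} (v : E) :
    fderiv ℝ (fun x => -f x) q v = -fderiv ℝ f q v := by
  rw [fderiv_fun_neg]; simp

lemma contDiffAt_pd {n : ℕ} {f : E → ℝ} {q : E}
    (hf : ContDiffAt ℝ (n + 1) f q) (v : E) :
    ContDiffAt ℝ n (fun x => fderiv ℝ f x v) q := by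
  have h1 : ContDiffAt ℝ n (fderiv ℝ f) q := hf.fderiv_right (by norm_cast)
  exact ((ContinuousLinearMap.apply ℝ ℝ v).contDiff.contDiffAt).comp q h1

lemma pd_symm {f : E → ℝ} {q : E} (hf : ContDiffAt ℝ 2 f q) (v w : E) :
    fderiv ℝ (fun x => fderiv ℝ f x w) q v = fderiv ℝ (fun x => fderiv ℝ f x v) q w := by
  have hd : DifferentiableAt ℝ (fderiv ℝ f) q :=
    (hf.fderiv_right (m := 1) (by norm_num)).differentiableAt one_ne_zero
  have hsym := hf.isSymmSndFDerivAt (by simp)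
  rw [fderiv_clm_apply hd (differentiableAt_const w),
    fderiv_clm_apply hd (differentiableAt_const v)]
  simpa using hsym v w

end helpers

section helpers
variable {E : Type*} [NormedAddCommGroup E] [NormedSpace ℝ E]
variable {F : Type*} [NormedAddCommGroup F] [NormedSpace ℝ F]

lemma pd_comp_fst {g : F → ℝ} {q : F × ℝ} (hg : DifferentiableAt ℝ g q.1) (v : F × ℝ) :
    fderiv ℝ (fun x : F × ℝ => g x.1) q v = fderiv ℝ g q.1 v.1 := by
  have h : (fun x : F × ℝ => g x.1) = g ∘ Prod.fst := rfl
  rw [h, fderiv_comp q hg differentiableAt_fst]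
  simp [fderiv_fst]

lemma pd_snd_add_one {q : F × ℝ} (v : F × ℝ) :
    fderiv ℝ (fun x : F × ℝ => x.2 + 1) q v = v.2 := by
  rw [fderiv_add_const, fderiv_snd]
  rfl

lemma pd_clm_apply {g : E → ℝ} {x : E} (h : DifferentiableAt ℝ (fderiv ℝ g) x) (u w : E) :
    fderiv ℝ (fun y => fderiv ℝ g y w) x u = fderiv ℝ (fderiv ℝ g) x u w := by
  rw [fderiv_clm_apply h (differentiableAt_const w)]
  simp

end helpers

/-- Horizontal partial derivative in the `i`-th direction of a function of
`(X, z) ∈ ℝ^d × ℝ`. -/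
noncomputable def pdX {d : ℕ} (i : Fin d) (f : (Fin d → ℝ) × ℝ → ℝ) :
    (Fin d → ℝ) × ℝ → ℝ :=
  fun p => fderiv ℝ f p (Pi.single i 1, 0)

/-- Vertical partial derivative of a function of `(X, z) ∈ ℝ^d × ℝ`. -/
noncomputable def pdZ {d : ℕ} (f : (Fin d → ℝ) × ℝ → ℝ) :
    (Fin d → ℝ) × ℝ → ℝ :=
  fun p => fderiv ℝ f p (0, 1)

/-- If `ζ` is C², `Φ` is C³ on `ℝ^d × I` (`I` an open interval) and satisfies
`μ₂Δ_XΦ + ∂_z²Φ = 0` there, then pointwise on `ℝ^d × I` one has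
`∇^{μ₂}_{X,z}·(Q₁∇^{μ₂}_{X,z}Φ) = -(μ₂Δ_X + ∂_z²)[(z+1)ζ(X)∂_zΦ]`, where `Q₁` is the
matrix with upper-left block `ζ I`, off-diagonal blocks `-√μ₂(z+1)∇ζ` and lower-right
entry `-ζ`. -/
theorem corrector_identity (d : ℕ) (hd : 1 ≤ d) (μ₂ : ℝ) (hμ₂ : 0 < μ₂)
    (ζ : (Fin d → ℝ) → ℝ) (hζ : ContDiff ℝ 2 ζ)
    (z₁ z₂ : ℝ) (Φ : (Fin d → ℝ) × ℝ → ℝ)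
    (hΦ : ContDiffOn ℝ 3 Φ ((Set.univ : Set (Fin d → ℝ)) ×ˢ Set.Ioo z₁ z₂))
    (hlap : ∀ p : (Fin d → ℝ) × ℝ, p.2 ∈ Set.Ioo z₁ z₂ →
      μ₂ * (∑ i, pdX i (pdX i Φ) p) + pdZ (pdZ Φ) p = 0) :
    ∀ p : (Fin d → ℝ) × ℝ, p.2 ∈ Set.Ioo z₁ z₂ →
      (∑ i, Real.sqrt μ₂ * pdX i (fun q =>
            ζ q.1 * (Real.sqrt μ₂ * pdX i Φ q)
              + (-(Real.sqrt μ₂) * (q.2 + 1) * fderiv ℝ ζ q.1 (Pi.single i 1))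
                * pdZ Φ q) p)
        + pdZ (fun q =>
            (∑ j, (-(Real.sqrt μ₂) * (q.2 + 1) * fderiv ℝ ζ q.1 (Pi.single j 1))
                * (Real.sqrt μ₂ * pdX j Φ q))
              + (-(ζ q.1)) * pdZ Φ q) p
      = -(μ₂ * (∑ i, pdX i (pdX i (fun q => (q.2 + 1) * ζ q.1 * pdZ Φ q)) p)
          + pdZ (pdZ (fun q => (q.2 + 1) * ζ q.1 * pdZ Φ q)) p) := by
  intro p hp
  have hss : Real.sqrt μ₂ * Real.sqrt μ₂ = μ₂ := Real.mul_self_sqrt hμ₂.le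
  set s := Real.sqrt μ₂ with hsdef
  set U := ((Set.univ : Set (Fin d → ℝ)) ×ˢ Set.Ioo z₁ z₂) with hUdef
  have hU : IsOpen U := isOpen_univ.prod isOpen_Ioo
  have hpU : p ∈ U := ⟨trivial, hp⟩
  -- smoothness of Φ and its derivatives
  have hΦ3 : ∀ q ∈ U, ContDiffAt ℝ 3 Φ q := fun q hq => hΦ.contDiffAt (hU.mem_nhds hq)
  have h2 : ∀ q ∈ U, ∀ v : (Fin d → ℝ) × ℝ,
      ContDiffAt ℝ 2 (fun x => fderiv ℝ Φ x v) q := by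
    intro q hq v
    exact contDiffAt_pd (n := 2) (by exact_mod_cast hΦ3 q hq) v
  have h1 : ∀ q ∈ U, ∀ v w : (Fin d → ℝ) × ℝ,
      ContDiffAt ℝ 1 (fun x => fderiv ℝ (fun y => fderiv ℝ Φ y v) x w) q := by
    intro q hq v w
    exact contDiffAt_pd (n := 1) (by exact_mod_cast h2 q hq v) w
  have d2 : ∀ q ∈ U, ∀ v : (Fin d → ℝ) × ℝ,
      DifferentiableAt ℝ (fun x => fderiv ℝ Φ x v) q :=
    fun q hq v => (h2 q hq v).differentiableAt (by norm_num)
  have d1 : ∀ q ∈ U, ∀ v w : (Fin d → ℝ) × ℝ,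
      DifferentiableAt ℝ (fun x => fderiv ℝ (fun y => fderiv ℝ Φ y v) x w) q :=
    fun q hq v w => (h1 q hq v w).differentiableAt (by norm_num)
  -- smoothness of ζ and friends
  have hζd : Differentiable ℝ ζ := hζ.differentiable two_ne_zero
  have hζ1 : ContDiff ℝ 1 (fderiv ℝ ζ) := hζ.fderiv_right (by norm_num)
  have hζ'd : Differentiable ℝ (fderiv ℝ ζ) := hζ1.differentiable one_ne_zero
  have hBd : ∀ w : Fin d → ℝ, Differentiable ℝ (fun X => fderiv ℝ ζ X w) :=
    fun w => (ContinuousLinearMap.apply ℝ ℝ w).differentiable.comp hζ'd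
  have hABd : Differentiable ℝ (fun x : (Fin d → ℝ) × ℝ => ζ x.1) :=
    hζd.comp differentiable_fst
  have hBBd : ∀ w : Fin d → ℝ,
      Differentiable ℝ (fun x : (Fin d → ℝ) × ℝ => fderiv ℝ ζ x.1 w) :=
    fun w => (hBd w).comp differentiable_fst
  have hzd : Differentiable ℝ (fun x : (Fin d → ℝ) × ℝ => x.2 + 1) :=
    differentiable_snd.add_const 1
  -- symmetry of second derivatives of Φ on U
  have hΦ2 : ∀ q ∈ U, ContDiffAt ℝ 2 Φ q := fun q hq => (hΦ3 q hq).of_le (by norm_num)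
  have hsymU : ∀ q ∈ U, ∀ v w : (Fin d → ℝ) × ℝ,
      fderiv ℝ (fun x => fderiv ℝ Φ x w) q v = fderiv ℝ (fun x => fderiv ℝ Φ x v) q w :=
    fun q hq => pd_symm (hΦ2 q hq)
  -- second-derivative symmetry of Φ at p in symmetric form used below
  have hsymm1 : ∀ i : Fin d,
      fderiv ℝ (fun x => fderiv ℝ Φ x (Pi.single i 1, 0)) p (0, 1)
        = fderiv ℝ (fun x => fderiv ℝ Φ x (0, 1)) p (Pi.single i 1, 0) :=
    fun i => hsymU p hpU (0, 1) (Pi.single i 1, 0)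
  -- LHS horizontal part, i-th summand
  have hL : ∀ i ∈ (Finset.univ : Finset (Fin d)),
      s * fderiv ℝ (fun q : (Fin d → ℝ) × ℝ =>
            ζ q.1 * (s * fderiv ℝ Φ q (Pi.single i 1, 0))
              + -s * (q.2 + 1) * fderiv ℝ ζ q.1 (Pi.single i 1) * fderiv ℝ Φ q (0, 1))
          p (Pi.single i 1, 0)
      = s * s * (fderiv ℝ ζ p.1 (Pi.single i 1) * fderiv ℝ Φ p (Pi.single i 1, 0))
        + (s * s * ζ p.1) * fderiv ℝ (fun x => fderiv ℝ Φ x (Pi.single i 1, 0)) p (Pi.single i 1, 0)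
        + (-(s * s * (p.2 + 1))) * (fderiv ℝ (fderiv ℝ ζ) p.1 (Pi.single i 1) (Pi.single i 1)
            * fderiv ℝ Φ p (0, 1))
        + (-(s * s * (p.2 + 1))) * (fderiv ℝ ζ p.1 (Pi.single i 1)
            * fderiv ℝ (fun x => fderiv ℝ Φ x (0, 1)) p (Pi.single i 1, 0)) := by
    intro i _
    have dA : DifferentiableAt ℝ (fun q : (Fin d → ℝ) × ℝ =>
        ζ q.1 * (s * fderiv ℝ Φ q (Pi.single i 1, 0))) p :=
      (hABd p).mul ((d2 p hpU (Pi.single i 1, 0)).const_mul s)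
    have dc : DifferentiableAt ℝ (fun q : (Fin d → ℝ) × ℝ =>
        -s * (q.2 + 1) * fderiv ℝ ζ q.1 (Pi.single i 1)) p :=
      ((hzd.const_mul (-s)) p).mul ((hBBd (Pi.single i 1)) p)
    have dB : DifferentiableAt ℝ (fun q : (Fin d → ℝ) × ℝ =>
        -s * (q.2 + 1) * fderiv ℝ ζ q.1 (Pi.single i 1) * fderiv ℝ Φ q (0, 1)) p :=
      dc.mul (d2 p hpU (0, 1))
    rw [pd_add dA dB,
      pd_mul (hABd p) ((d2 p hpU (Pi.single i 1, 0)).const_mul s),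
      pd_comp_fst (hζd p.1),
      pd_const_mul (d2 p hpU (Pi.single i 1, 0)) s,
      pd_mul dc (d2 p hpU (0, 1)),
      pd_mul ((hzd.const_mul (-s)) p) ((hBBd (Pi.single i 1)) p),
      pd_const_mul (hzd p) (-s), pd_snd_add_one,
      pd_comp_fst (g := fun X => fderiv ℝ ζ X (Pi.single i 1)) (hBd (Pi.single i 1) p.1),
      pd_clm_apply (hζ'd p.1)]
    simp only []
    ring
  -- LHS vertical part
  have hterm : ∀ j ∈ (Finset.univ : Finset (Fin d)),
      fderiv ℝ (fun q : (Fin d → ℝ) × ℝ =>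
          -s * (q.2 + 1) * fderiv ℝ ζ q.1 (Pi.single j 1)
            * (s * fderiv ℝ Φ q (Pi.single j 1, 0))) p (0, 1)
      = (-(s * s)) * (fderiv ℝ ζ p.1 (Pi.single j 1) * fderiv ℝ Φ p (Pi.single j 1, 0))
        + (-(s * s * (p.2 + 1))) * (fderiv ℝ ζ p.1 (Pi.single j 1)
            * fderiv ℝ (fun x => fderiv ℝ Φ x (0, 1)) p (Pi.single j 1, 0)) := by
    intro j _
    have dcj : DifferentiableAt ℝ (fun q : (Fin d → ℝ) × ℝ =>
        -s * (q.2 + 1) * fderiv ℝ ζ q.1 (Pi.single j 1)) p :=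
      ((hzd.const_mul (-s)) p).mul ((hBBd (Pi.single j 1)) p)
    rw [pd_mul dcj ((d2 p hpU (Pi.single j 1, 0)).const_mul s),
      pd_mul ((hzd.const_mul (-s)) p) ((hBBd (Pi.single j 1)) p),
      pd_const_mul (hzd p) (-s), pd_snd_add_one,
      pd_comp_fst (g := fun X => fderiv ℝ ζ X (Pi.single j 1)) (hBd (Pi.single j 1) p.1),
      pd_clm_apply (hζ'd p.1),
      pd_const_mul (d2 p hpU (Pi.single j 1, 0)) s,
      hsymm1 j]
    simp only [map_zero, ContinuousLinearMap.zero_apply]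
    ring
  have dsum : DifferentiableAt ℝ (fun q : (Fin d → ℝ) × ℝ =>
      ∑ j : Fin d, -s * (q.2 + 1) * fderiv ℝ ζ q.1 (Pi.single j 1)
        * (s * fderiv ℝ Φ q (Pi.single j 1, 0))) p := by
    apply DifferentiableAt.fun_sum
    intro j _
    exact (((hzd.const_mul (-s)) p).mul ((hBBd (Pi.single j 1)) p)).mul
      ((d2 p hpU (Pi.single j 1, 0)).const_mul s)
  have hLZ : fderiv ℝ (fun q : (Fin d → ℝ) × ℝ =>
        (∑ j : Fin d, -s * (q.2 + 1) * fderiv ℝ ζ q.1 (Pi.single j 1)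
          * (s * fderiv ℝ Φ q (Pi.single j 1, 0)))
        + -ζ q.1 * fderiv ℝ Φ q (0, 1)) p (0, 1)
      = (∑ j : Fin d,
          ((-(s * s)) * (fderiv ℝ ζ p.1 (Pi.single j 1) * fderiv ℝ Φ p (Pi.single j 1, 0))
            + (-(s * s * (p.2 + 1))) * (fderiv ℝ ζ p.1 (Pi.single j 1)
                * fderiv ℝ (fun x => fderiv ℝ Φ x (0, 1)) p (Pi.single j 1, 0))))
        + (-(ζ p.1)) * fderiv ℝ (fun x => fderiv ℝ Φ x (0, 1)) p (0, 1) := by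
    have dlast : DifferentiableAt ℝ (fun q : (Fin d → ℝ) × ℝ =>
        -ζ q.1 * fderiv ℝ Φ q (0, 1)) p := ((hABd p).neg).mul (d2 p hpU (0, 1))
    rw [pd_add dsum dlast,
      pd_sum Finset.univ (fun j _ =>
        (((hzd.const_mul (-s)) p).fun_mul ((hBBd (Pi.single j 1)) p)).fun_mul
          ((d2 p hpU (Pi.single j 1, 0)).const_mul s)) (0, 1),
      Finset.sum_congr rfl hterm,
      pd_mul ((hABd p).fun_neg) (d2 p hpU (0, 1)),
      pd_neg, pd_comp_fst (hζd p.1)]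
    simp only [map_zero, ContinuousLinearMap.zero_apply]
    ring
  -- expansions of first derivatives of g = (z+1)ζ∂zΦ, valid on U
  have hgX : ∀ i : Fin d, ∀ q ∈ U,
      fderiv ℝ (fun x : (Fin d → ℝ) × ℝ =>
          (x.2 + 1) * ζ x.1 * fderiv ℝ Φ x (0, 1)) q (Pi.single i 1, 0)
      = (q.2 + 1) * fderiv ℝ ζ q.1 (Pi.single i 1) * fderiv ℝ Φ q (0, 1)
        + (q.2 + 1) * ζ q.1
            * fderiv ℝ (fun y => fderiv ℝ Φ y (0, 1)) q (Pi.single i 1, 0) := by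
    intro i q hq
    rw [pd_mul ((hzd q).fun_mul (hABd q)) (d2 q hq (0, 1)),
      pd_mul (hzd q) (hABd q), pd_snd_add_one, pd_comp_fst (hζd q.1)]
    simp only [map_zero, ContinuousLinearMap.zero_apply]
    ring
  have hgZ : ∀ q ∈ U,
      fderiv ℝ (fun x : (Fin d → ℝ) × ℝ =>
          (x.2 + 1) * ζ x.1 * fderiv ℝ Φ x (0, 1)) q (0, 1)
      = ζ q.1 * fderiv ℝ Φ q (0, 1)
        + (q.2 + 1) * ζ q.1 * fderiv ℝ (fun y => fderiv ℝ Φ y (0, 1)) q (0, 1) := by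
    intro q hq
    rw [pd_mul ((hzd q).fun_mul (hABd q)) (d2 q hq (0, 1)),
      pd_mul (hzd q) (hABd q), pd_snd_add_one, pd_comp_fst (hζd q.1)]
    simp only [map_zero, ContinuousLinearMap.zero_apply]
    ring
  -- third-order symmetry: ρ i = σ i
  have hrho : ∀ i : Fin d,
      fderiv ℝ (fun x => fderiv ℝ (fun y => fderiv ℝ Φ y (0, 1)) x (Pi.single i 1, 0))
          p (Pi.single i 1, 0)
      = fderiv ℝ (fun x => fderiv ℝ (fun y => fderiv ℝ Φ y (Pi.single i 1, 0))
          x (Pi.single i 1, 0)) p (0, 1) := by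
    intro i
    have e1 : (fun x => fderiv ℝ (fun y => fderiv ℝ Φ y (0, 1)) x (Pi.single i 1, 0))
        =ᶠ[nhds p] (fun x => fderiv ℝ (fun y => fderiv ℝ Φ y (Pi.single i 1, 0)) x (0, 1)) :=
      Filter.eventuallyEq_of_mem (hU.mem_nhds hpU)
        (fun q hq => hsymU q hq (Pi.single i 1, 0) (0, 1))
    rw [pd_congr e1 (Pi.single i 1, 0)]
    exact pd_symm (h2 p hpU (Pi.single i 1, 0)) (Pi.single i 1, 0) (0, 1)
  -- i-th summand of RHS
  have hRX : ∀ i ∈ (Finset.univ : Finset (Fin d)),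
      fderiv ℝ (fun x => fderiv ℝ (fun q : (Fin d → ℝ) × ℝ =>
          (q.2 + 1) * ζ q.1 * fderiv ℝ Φ q (0, 1)) x (Pi.single i 1, 0)) p (Pi.single i 1, 0)
      = (p.2 + 1) * (fderiv ℝ (fderiv ℝ ζ) p.1 (Pi.single i 1) (Pi.single i 1)
            * fderiv ℝ Φ p (0, 1))
        + (2 * (p.2 + 1)) * (fderiv ℝ ζ p.1 (Pi.single i 1)
            * fderiv ℝ (fun x => fderiv ℝ Φ x (0, 1)) p (Pi.single i 1, 0))
        + ((p.2 + 1) * ζ p.1) * fderiv ℝ (fun x => fderiv ℝ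
            (fun y => fderiv ℝ Φ y (Pi.single i 1, 0)) x (Pi.single i 1, 0)) p (0, 1) := by
    intro i _
    have e1 : (fun x => fderiv ℝ (fun q : (Fin d → ℝ) × ℝ =>
          (q.2 + 1) * ζ q.1 * fderiv ℝ Φ q (0, 1)) x (Pi.single i 1, 0))
        =ᶠ[nhds p] (fun q => (q.2 + 1) * fderiv ℝ ζ q.1 (Pi.single i 1) * fderiv ℝ Φ q (0, 1)
          + (q.2 + 1) * ζ q.1 * fderiv ℝ (fun y => fderiv ℝ Φ y (0, 1)) q (Pi.single i 1, 0)) :=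
      Filter.eventuallyEq_of_mem (hU.mem_nhds hpU) (fun q hq => hgX i q hq)
    rw [pd_congr e1 (Pi.single i 1, 0)]
    have dT1 : DifferentiableAt ℝ (fun q : (Fin d → ℝ) × ℝ =>
        (q.2 + 1) * fderiv ℝ ζ q.1 (Pi.single i 1) * fderiv ℝ Φ q (0, 1)) p :=
      ((hzd p).mul ((hBBd (Pi.single i 1)) p)).mul (d2 p hpU (0, 1))
    have dT2 : DifferentiableAt ℝ (fun q : (Fin d → ℝ) × ℝ =>
        (q.2 + 1) * ζ q.1 * fderiv ℝ (fun y => fderiv ℝ Φ y (0, 1)) q (Pi.single i 1, 0)) p :=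
      ((hzd p).mul (hABd p)).mul (d1 p hpU (0, 1) (Pi.single i 1, 0))
    rw [pd_add dT1 dT2,
      pd_mul ((hzd p).fun_mul ((hBBd (Pi.single i 1)) p)) (d2 p hpU (0, 1)),
      pd_mul (hzd p) ((hBBd (Pi.single i 1)) p), pd_snd_add_one,
      pd_comp_fst (g := fun X => fderiv ℝ ζ X (Pi.single i 1)) (hBd (Pi.single i 1) p.1),
      pd_clm_apply (hζ'd p.1),
      pd_mul ((hzd p).fun_mul (hABd p)) (d1 p hpU (0, 1) (Pi.single i 1, 0)),
      pd_mul (hzd p) (hABd p), pd_snd_add_one, pd_comp_fst (hζd p.1),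
      hrho i]
    simp only [map_zero, ContinuousLinearMap.zero_apply]
    ring
  -- vertical part of RHS
  have hRZZ : fderiv ℝ (fun x => fderiv ℝ (fun q : (Fin d → ℝ) × ℝ =>
        (q.2 + 1) * ζ q.1 * fderiv ℝ Φ q (0, 1)) x (0, 1)) p (0, 1)
      = (2 * ζ p.1) * fderiv ℝ (fun x => fderiv ℝ Φ x (0, 1)) p (0, 1)
        + ((p.2 + 1) * ζ p.1) * fderiv ℝ (fun x => fderiv ℝ
            (fun y => fderiv ℝ Φ y (0, 1)) x (0, 1)) p (0, 1) := by
    have e1 : (fun x => fderiv ℝ (fun q : (Fin d → ℝ) × ℝ =>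
          (q.2 + 1) * ζ q.1 * fderiv ℝ Φ q (0, 1)) x (0, 1))
        =ᶠ[nhds p] (fun q => ζ q.1 * fderiv ℝ Φ q (0, 1)
          + (q.2 + 1) * ζ q.1 * fderiv ℝ (fun y => fderiv ℝ Φ y (0, 1)) q (0, 1)) :=
      Filter.eventuallyEq_of_mem (hU.mem_nhds hpU) hgZ
    rw [pd_congr e1 (0, 1)]
    have dT1 : DifferentiableAt ℝ (fun q : (Fin d → ℝ) × ℝ =>
        ζ q.1 * fderiv ℝ Φ q (0, 1)) p := (hABd p).mul (d2 p hpU (0, 1))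
    have dT2 : DifferentiableAt ℝ (fun q : (Fin d → ℝ) × ℝ =>
        (q.2 + 1) * ζ q.1 * fderiv ℝ (fun y => fderiv ℝ Φ y (0, 1)) q (0, 1)) p :=
      ((hzd p).mul (hABd p)).mul (d1 p hpU (0, 1) (0, 1))
    rw [pd_add dT1 dT2,
      pd_mul (hABd p) (d2 p hpU (0, 1)), pd_comp_fst (hζd p.1),
      pd_mul ((hzd p).fun_mul (hABd p)) (d1 p hpU (0, 1) (0, 1)),
      pd_mul (hzd p) (hABd p), pd_snd_add_one, pd_comp_fst (hζd p.1)]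
    simp only [map_zero, ContinuousLinearMap.zero_apply]
    ring
  -- the scaled Laplacian of Φ vanishes on U
  have hlap' : ∀ q ∈ U,
      s * s * (∑ i : Fin d, fderiv ℝ (fun y => fderiv ℝ Φ y (Pi.single i 1, 0))
          q (Pi.single i 1, 0))
        + fderiv ℝ (fun y => fderiv ℝ Φ y (0, 1)) q (0, 1) = 0 := by
    intro q hq
    have h := hlap q hq.2
    unfold pdX pdZ at h
    rw [← hss] at h
    exact h
  -- z-derivative of the Laplacian identity
  have dsum3 : DifferentiableAt ℝ (fun q : (Fin d → ℝ) × ℝ =>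
      ∑ i : Fin d, fderiv ℝ (fun y => fderiv ℝ Φ y (Pi.single i 1, 0))
        q (Pi.single i 1, 0)) p :=
    DifferentiableAt.fun_sum (fun i _ => d1 p hpU (Pi.single i 1, 0) (Pi.single i 1, 0))
  have hz3 : s * s * (∑ i : Fin d, fderiv ℝ (fun x => fderiv ℝ
        (fun y => fderiv ℝ Φ y (Pi.single i 1, 0)) x (Pi.single i 1, 0)) p (0, 1))
      + fderiv ℝ (fun x => fderiv ℝ (fun y => fderiv ℝ Φ y (0, 1)) x (0, 1)) p (0, 1)
      = 0 := by
    have e0 : (fun q : (Fin d → ℝ) × ℝ =>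
        s * s * (∑ i : Fin d, fderiv ℝ (fun y => fderiv ℝ Φ y (Pi.single i 1, 0))
          q (Pi.single i 1, 0))
        + fderiv ℝ (fun y => fderiv ℝ Φ y (0, 1)) q (0, 1)) =ᶠ[nhds p]
        (fun _ => (0 : ℝ)) :=
      Filter.eventuallyEq_of_mem (hU.mem_nhds hpU) hlap'
    have h0 := pd_congr e0 ((0 : Fin d → ℝ), (1 : ℝ))
    rw [pd_add (dsum3.const_mul (s * s)) (d1 p hpU (0, 1) (0, 1)),
      pd_const_mul dsum3 (s * s),
      pd_sum Finset.univ
        (fun i _ => d1 p hpU (Pi.single i 1, 0) (Pi.single i 1, 0)) ((0 : Fin d → ℝ), 1),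
      fderiv_fun_const] at h0
    simpa using h0
  -- assemble
  unfold pdX pdZ
  rw [← hss]
  rw [Finset.sum_congr rfl hL, hLZ, Finset.sum_congr rfl hRX, hRZZ]
  simp only [Finset.sum_add_distrib, ← Finset.mul_sum]
  linear_combination (ζ p.1) * hlap' p hpU + ((p.2 + 1) * ζ p.1) * hz3
end
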